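/- For all integers k ≥ 2 and r ≥ 2, if φ is a graph homomorphism from the Andrásfai graph A_{k,r} to a graph H with |V(H)| < |V(A_{k,r})|, then H contains an odd cycle of length at most 2k-1. -/

import Mathlib

/-- The generalised Andrásfai graph `A_{k,r}`. -/
def andrasfai (k r : ℕ) : SimpleGraph (Fin ((2*k-1)*(r-1)+2)) :=
  SimpleGraph.fromRel fun i j =>
    (((k : ℚ) - 1) / (2 * k - 1) <
        (min (((i.val : ℤ) - (j.val : ℤ)).natAbs)
            ((2*k-1)*(r-1)+2 - ((i.val : ℤ) - (j.val : ℤ)).natAbs) : ℚ) /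
          ((2*k-1)*(r-1)+2)) ∧
    ((min (((i.val : ℤ) - (j.val : ℤ)).natAbs)
            ((2*k-1)*(r-1)+2 - ((i.val : ℤ) - (j.val : ℤ)).natAbs) : ℚ) /
          ((2*k-1)*(r-1)+2) < (k : ℚ) / (2 * k - 1))

open SimpleGraph

private lemma aux_closed_nodup_length_zero {V : Type} {G : SimpleGraph V} {x : V}
    (q : G.Walk x x) (h : q.support.Nodup) : q.length = 0 := by
  cases q with
  | nil => rfl
  | cons h' q' =>
    exfalso
    rw [Walk.support_cons, List.nodup_cons] at h
    exact h.1 q'.end_mem_support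

private lemma aux_length_eq_one_of_mem_edges {V : Type} {G : SimpleGraph V} {v x : V}
    (q : G.Walk v x) (hq : q.support.Nodup) (he : s(x, v) ∈ q.edges) : q.length = 1 := by
  cases q with
  | nil => simp at he
  | cons h' q' =>
    rw [Walk.edges_cons, List.mem_cons] at he
    rw [Walk.support_cons, List.nodup_cons] at hq
    rcases he with he | he
    · rw [Sym2.eq_iff] at he
      rcases he with ⟨h1, h2⟩ | ⟨h1, h2⟩
      · exact absurd (h1 ▸ q'.end_mem_support) hq.1
      · subst h1
        rw [Walk.length_cons, aux_closed_nodup_length_zero q' hq.2]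
    · exact absurd (q'.snd_mem_support_of_mem_edges he) hq.1

private lemma aux_exists_odd_cycle {V : Type} {G : SimpleGraph V} :
    ∀ (m : ℕ) {x : V} (w : G.Walk x x), w.length ≤ m → Odd w.length →
    ∃ (y : V) (c : G.Walk y y), c.IsCycle ∧ Odd c.length ∧ c.length ≤ w.length := by
  classical
  intro m
  induction m with
  | zero =>
    intro x w hl ho
    rcases ho with ⟨c, hc⟩; omega
  | succ m ih =>
    intro x w hl ho
    by_cases hnd : w.support.tail.Nodup
    · cases w with
      | nil => rcases ho with ⟨c, hc⟩; simp only [Walk.length_nil] at hc; omega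
      | cons hadj q =>
        rw [Walk.support_cons, List.tail_cons] at hnd
        refine ⟨x, Walk.cons hadj q, ?_, ho, le_rfl⟩
        rw [Walk.cons_isCycle_iff]
        refine ⟨Walk.IsPath.mk' hnd, fun he => ?_⟩
        have h1 := aux_length_eq_one_of_mem_edges q hnd he
        rw [Walk.length_cons, h1] at ho
        rcases ho with ⟨c, hc⟩; omega
    · obtain ⟨y, hdup⟩ := List.exists_duplicate_iff_not_nodup.2 hnd
      have hy : y ∈ w.support := List.mem_of_mem_tail hdup.mem
      have hcount : 2 ≤ w.support.tail.count y := List.duplicate_iff_two_le_count.1 hdup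
      obtain ⟨w', hlen', hcount'⟩ :
          ∃ w' : G.Walk y y, w'.length = w.length ∧ 2 ≤ w'.support.tail.count y := by
        refine ⟨w.rotate y hy, ?_, ?_⟩
        · have hspec := congrArg Walk.length (w.take_spec hy)
          rw [Walk.length_append] at hspec
          unfold Walk.rotate; rw [Walk.length_append]
          omega
        · rw [List.Perm.count_eq (w.support_rotate y hy).perm]
          exact hcount
      cases w' with
      | nil => simp at hcount'
      | cons hadj q =>
        rw [Walk.support_cons, List.tail_cons] at hcount'
        have hyq : y ∈ q.support := by
          refine List.count_pos_iff.mp ?_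
          omega
        have hlen2 := congrArg Walk.length (q.take_spec hyq)
        rw [Walk.length_append] at hlen2
        have hsupp := congrArg (List.count y) (congrArg Walk.support (q.take_spec hyq))
        rw [Walk.support_append, List.count_append] at hsupp
        have hcnt1 := q.count_support_takeUntil_eq_one hyq
        have hcnt2 : 1 ≤ (q.dropUntil y hyq).support.tail.count y := by omega
        have hdroplen : 1 ≤ (q.dropUntil y hyq).length := by
          by_contra hcon
          push_neg at hcon
          have h0 : (q.dropUntil y hyq).length = 0 := by omega
          have hls := Walk.length_support (q.dropUntil y hyq)
          have htl : (q.dropUntil y hyq).support.tail.length = 0 := by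
            rw [List.length_tail, hls, h0]
          rw [List.length_eq_zero_iff.mp htl] at hcnt2
          simp at hcnt2
        have hwq : q.length + 1 = w.length := by
          rw [← hlen', Walk.length_cons]
        have hc1len : (Walk.cons hadj (q.takeUntil y hyq)).length
            = (q.takeUntil y hyq).length + 1 := Walk.length_cons _ _
        rcases Nat.even_or_odd (Walk.cons hadj (q.takeUntil y hyq)).length with he1 | ho1
        · have ho2 : Odd (q.dropUntil y hyq).length := by
            rcases ho with ⟨s, hs⟩; rcases he1 with ⟨u, hu⟩
            rw [Nat.odd_iff]; omega
          obtain ⟨z, c, hcyc, hodd, hle⟩ := ih (q.dropUntil y hyq) (by omega) ho2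
          exact ⟨z, c, hcyc, hodd, by omega⟩
        · obtain ⟨z, c, hcyc, hodd, hle⟩ := ih (Walk.cons hadj (q.takeUntil y hyq)) (by omega) ho1
          exact ⟨z, c, hcyc, hodd, by omega⟩

private lemma aux_int_min_bound {N L U d e : ℤ} (hL : 1 ≤ L) (hLU : L ≤ U) (hUN : U + L = N)
    (hd1 : -N < d) (hd2 : d < N) (hdvd : N ∣ d + e)
    (he : (L ≤ e ∧ e ≤ U) ∨ (L ≤ -e ∧ -e ≤ U)) :
    L ≤ min ((d.natAbs : ℤ)) (N - (d.natAbs : ℤ)) ∧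
      min ((d.natAbs : ℤ)) (N - (d.natAbs : ℤ)) ≤ U ∧ d ≠ 0 := by
  obtain ⟨c, hc⟩ := hdvd
  have hN : 0 < N := by omega
  have he' : -N < e ∧ e < N := by omega
  have hc2 : c < 2 := by nlinarith
  have hc1 : -2 < c := by nlinarith
  interval_cases c <;> omega

private lemma aux_andrasfai_adj (k r : ℕ) (hk : 2 ≤ k) (hr : 2 ≤ r)
    (i j : Fin ((2*k-1)*(r-1)+2)) (hne : i ≠ j)
    (h1 : ((k:ℤ)-1)*((r:ℤ)-1)+1 ≤ min (((((i.val:ℤ) - (j.val:ℤ)).natAbs : ℕ)):ℤ)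
        ((2*(k:ℤ)-1)*((r:ℤ)-1)+2 - (((((i.val:ℤ) - (j.val:ℤ)).natAbs : ℕ)):ℤ)))
    (h2 : min (((((i.val:ℤ) - (j.val:ℤ)).natAbs : ℕ)):ℤ)
        ((2*(k:ℤ)-1)*((r:ℤ)-1)+2 - (((((i.val:ℤ) - (j.val:ℤ)).natAbs : ℕ)):ℤ))
        ≤ (k:ℤ)*((r:ℤ)-1)+1) :
    (andrasfai k r).Adj i j := by
  rw [andrasfai, SimpleGraph.fromRel_adj]
  have hkq : (2:ℚ) ≤ (k:ℚ) := by exact_mod_cast hk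
  have hrq : (2:ℚ) ≤ (r:ℚ) := by exact_mod_cast hr
  have hD : (0:ℚ) < 2*(k:ℚ)-1 := by linarith
  have hNq : (0:ℚ) < (2*(k:ℚ)-1)*((r:ℚ)-1)+2 := by nlinarith
  set x : ℕ := (((i.val:ℤ) - (j.val:ℤ)).natAbs : ℕ) with hxdef
  set mz : ℤ := min ((x:ℤ)) ((2*(k:ℤ)-1)*((r:ℤ)-1)+2 - (x:ℤ)) with hmzdef
  have hmin : ((x:ℚ) ⊓ ((2*(k:ℚ)-1)*((r:ℚ)-1)+2 - (x:ℚ))) = ((mz:ℤ):ℚ) := by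
    rw [hmzdef]
    push_cast
    rfl
  have h1q : ((k:ℚ)-1)*((r:ℚ)-1)+1 ≤ ((mz:ℤ):ℚ) := by exact_mod_cast h1
  have h2q : ((mz:ℤ):ℚ) ≤ (k:ℚ)*((r:ℚ)-1)+1 := by exact_mod_cast h2
  refine ⟨hne, Or.inl ⟨?_, ?_⟩⟩
  · show ((k:ℚ)-1) / (2*(k:ℚ)-1) < _ / ((2*(k:ℚ)-1)*((r:ℚ)-1)+2)
    rw [div_lt_div_iff₀ hD hNq, hmin]
    nlinarith [mul_le_mul_of_nonneg_right h1q (le_of_lt hD)]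
  · show _ / ((2*(k:ℚ)-1)*((r:ℚ)-1)+2) < (k:ℚ) / (2*(k:ℚ)-1)
    rw [div_lt_div_iff₀ hNq hD, hmin]
    nlinarith [mul_le_mul_of_nonneg_right h2q (le_of_lt hD)]

private lemma aux_andrasfai_step (k r : ℕ) (hk : 2 ≤ k) (hr : 2 ≤ r)
    (i : Fin ((2*k-1)*(r-1)+2)) (e : ℤ)
    (he : (((k:ℤ)-1)*((r:ℤ)-1)+1 ≤ e ∧ e ≤ (k:ℤ)*((r:ℤ)-1)+1) ∨
          (((k:ℤ)-1)*((r:ℤ)-1)+1 ≤ -e ∧ -e ≤ (k:ℤ)*((r:ℤ)-1)+1)) :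
    ∃ j : Fin ((2*k-1)*(r-1)+2), (andrasfai k r).Adj i j ∧
      ((((2*k-1)*(r-1)+2 : ℕ)):ℤ) ∣ ((j.val:ℤ) - ((i.val:ℤ) + e)) := by
  have hk1 : (1:ℤ) ≤ (k:ℤ)-1 := by omega
  have hr1 : (1:ℤ) ≤ (r:ℤ)-1 := by omega
  set L : ℤ := ((k:ℤ)-1)*((r:ℤ)-1)+1 with hLdef
  set U : ℤ := (k:ℤ)*((r:ℤ)-1)+1 with hUdef
  have hNcast : ((((2*k-1)*(r-1)+2 : ℕ)):ℤ) = (2*(k:ℤ)-1)*((r:ℤ)-1)+2 := by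
    push_cast [Nat.cast_sub (show 1 ≤ 2*k by omega), Nat.cast_sub (show 1 ≤ r by omega)]
    ring
  set Nz : ℤ := (2*(k:ℤ)-1)*((r:ℤ)-1)+2 with hNdef
  have hL1 : 1 ≤ L := by rw [hLdef]; nlinarith
  have hLU : L ≤ U := by rw [hLdef, hUdef]; nlinarith
  have hUN : U + L = Nz := by rw [hLdef, hUdef, hNdef]; ring
  have hN0 : 0 < Nz := by omega
  have hiv0 : (0:ℤ) ≤ (i.val:ℤ) := Int.natCast_nonneg _
  have hivlt : (i.val:ℤ) < Nz := by
    rw [← hNcast]; exact_mod_cast i.isLt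
  set jv : ℤ := ((i.val:ℤ) + e) % Nz with hjvdef
  have hjv0 : 0 ≤ jv := Int.emod_nonneg _ (by omega)
  have hjvlt : jv < Nz := Int.emod_lt_of_pos _ hN0
  have hjn : jv.toNat < (2*k-1)*(r-1)+2 := by
    refine (Int.toNat_lt' (by omega)).mpr ?_
    rw [hNcast]; exact hjvlt
  have hjvv : ((jv.toNat : ℕ) : ℤ) = jv := Int.toNat_of_nonneg hjv0
  have hdvd : Nz ∣ ((i.val:ℤ) - jv) + e :=
    ⟨((i.val:ℤ) + e) / Nz, by rw [hjvdef, Int.emod_def]; ring⟩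
  have hb := aux_int_min_bound hL1 hLU hUN (show -Nz < (i.val:ℤ) - jv by omega)
      (show (i.val:ℤ) - jv < Nz by omega) hdvd he
  obtain ⟨hb1, hb2, hbne⟩ := hb
  refine ⟨⟨jv.toNat, hjn⟩, ?_, ?_⟩
  · refine aux_andrasfai_adj k r hk hr i ⟨jv.toNat, hjn⟩ ?_ ?_ ?_
    · intro hEq
      apply hbne
      have : i.val = jv.toNat := congrArg Fin.val hEq
      omega
    · show L ≤ min (((((i.val:ℤ) - ((jv.toNat:ℕ):ℤ)).natAbs : ℕ)):ℤ) (Nz - _)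
      rw [hjvv]
      exact hb1
    · show min (((((i.val:ℤ) - ((jv.toNat:ℕ):ℤ)).natAbs : ℕ)):ℤ) (Nz - _) ≤ U
      rw [hjvv]
      exact hb2
  · rw [hNcast]
    show Nz ∣ (((jv.toNat:ℕ):ℤ) - ((i.val:ℤ) + e))
    rw [hjvv]
    exact ⟨-(((i.val:ℤ) + e) / Nz), by rw [hjvdef, Int.emod_def]; ring⟩

private lemma aux_chain_walk {n : ℕ} {G : SimpleGraph (Fin n)} {L U : ℤ}
    (hL : 1 ≤ L) (hLU : L ≤ U)
    (hstep : ∀ (i : Fin n) (e : ℤ), ((L ≤ e ∧ e ≤ U) ∨ (L ≤ -e ∧ -e ≤ U)) →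
      ∃ j : Fin n, G.Adj i j ∧ (n:ℤ) ∣ ((j.val:ℤ) - ((i.val:ℤ) + e))) :
    ∀ (a b : ℕ) (t : ℤ) (i j : Fin n), ((n:ℤ) ∣ ((j.val:ℤ) - ((i.val:ℤ) + t))) →
      (a:ℤ)*L - (b:ℤ)*U ≤ t → t ≤ (a:ℤ)*U - (b:ℤ)*L →
      ∃ w : G.Walk i j, w.length = a + b := by
  intro a
  induction a with
  | zero =>
    intro b
    induction b with
    | zero =>
      intro t i j hdvd h1 h2
      have ht : t = 0 := by simp at h1 h2; omega
      subst ht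
      have hij : i = j := by
        have h0 : (j.val:ℤ) - ((i.val:ℤ) + 0) = 0 := by
          refine Int.eq_zero_of_abs_lt_dvd hdvd ?_
          have hi := i.isLt; have hj := j.isLt
          rw [abs_lt]; omega
        have : i.val = j.val := by omega
        exact Fin.ext this
      subst hij
      exact ⟨Walk.nil, rfl⟩
    | succ b ihb =>
      intro t i j hdvd h1 h2
      push_cast at h1 h2
      have hbU : (b:ℤ)*L ≤ (b:ℤ)*U := mul_le_mul_of_nonneg_left hLU (by positivity)
      set e : ℤ := max (-U) (min (-L) (t + (b:ℤ)*U)) with hedef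
      have he1 : -U ≤ e := le_max_left _ _
      have he2 : e ≤ -L := max_le (by linarith) (min_le_left _ _)
      have he3 : e ≤ t + (b:ℤ)*U := max_le (by linarith) (min_le_right _ _)
      have he4 : t + (b:ℤ)*L ≤ e :=
        le_trans (le_min (by linarith) (by linarith)) (le_max_right _ _)
      obtain ⟨v, hadj, hv⟩ := hstep i e (Or.inr ⟨by linarith, by linarith⟩)
      obtain ⟨w', hw'⟩ := ihb (t - e) v j
        (by
          have h3 : (j.val:ℤ) - ((v.val:ℤ) + (t - e))
              = ((j.val:ℤ) - ((i.val:ℤ) + t)) - ((v.val:ℤ) - ((i.val:ℤ) + e)) := by ring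
          rw [h3]; exact dvd_sub hdvd hv)
        (by norm_num; linarith) (by norm_num; linarith)
      exact ⟨Walk.cons hadj w', by rw [Walk.length_cons, hw']; omega⟩
  | succ a iha =>
    intro b t i j hdvd h1 h2
    push_cast at h1 h2
    have haL : (a:ℤ)*L ≤ (a:ℤ)*U := mul_le_mul_of_nonneg_left hLU (by positivity)
    have hbL : (b:ℤ)*L ≤ (b:ℤ)*U := mul_le_mul_of_nonneg_left hLU (by positivity)
    set e : ℤ := min U (max L (t - ((a:ℤ)*U - (b:ℤ)*L))) with hedef
    have he1 : e ≤ U := min_le_left _ _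
    have he2 : L ≤ e := le_min (by linarith) (le_max_left _ _)
    have he3 : t - ((a:ℤ)*U - (b:ℤ)*L) ≤ e := le_min (by linarith) (le_max_right _ _)
    have he4 : e ≤ t - ((a:ℤ)*L - (b:ℤ)*U) :=
      le_trans (min_le_right _ _) (max_le (by linarith) (by linarith))
    obtain ⟨v, hadj, hv⟩ := hstep i e (Or.inl ⟨he2, he1⟩)
    obtain ⟨w', hw'⟩ := iha b (t - e) v j
      (by
        have h3 : (j.val:ℤ) - ((v.val:ℤ) + (t - e))
            = ((j.val:ℤ) - ((i.val:ℤ) + t)) - ((v.val:ℤ) - ((i.val:ℤ) + e)) := by ring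
        rw [h3]; exact dvd_sub hdvd hv)
      (by linarith) (by linarith)
    exact ⟨Walk.cons hadj w', by rw [Walk.length_cons, hw']; omega⟩

/-- If `φ : A_{k,r} →g H` is a graph homomorphism into a graph `H` with fewer vertices than
`A_{k,r}`, then `H` contains an odd cycle of length at most `2k-1`. -/
theorem andrasfai_hom_target_has_short_odd_cycle (k r : ℕ) (hk : 2 ≤ k) (hr : 2 ≤ r)
    {W : Type} [Fintype W] (H : SimpleGraph W)
    (φ : andrasfai k r →g H) (hcard : Fintype.card W < (2*k-1)*(r-1)+2) :
    ∃ (x : W) (c : H.Walk x x), c.IsCycle ∧ Odd c.length ∧ c.length ≤ 2*k-1 := by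
  classical
  have hcards : Fintype.card W < Fintype.card (Fin ((2*k-1)*(r-1)+2)) := by simpa using hcard
  obtain ⟨i, j, hij, hphi⟩ := Fintype.exists_ne_map_eq_of_card_lt φ hcards
  have hk1 : (1:ℤ) ≤ (k:ℤ)-1 := by omega
  have hr1 : (1:ℤ) ≤ (r:ℤ)-1 := by omega
  set L : ℤ := ((k:ℤ)-1)*((r:ℤ)-1)+1 with hLdef
  set U : ℤ := (k:ℤ)*((r:ℤ)-1)+1 with hUdef
  have hL1 : 1 ≤ L := by rw [hLdef]; nlinarith
  have hLU : L ≤ U := by rw [hLdef, hUdef]; nlinarith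
  have hUL : ((((2*k-1)*(r-1)+2 : ℕ)):ℤ) = U + L := by
    rw [hLdef, hUdef]
    push_cast [Nat.cast_sub (show 1 ≤ 2*k by omega), Nat.cast_sub (show 1 ≤ r by omega)]
    ring
  have hstep : ∀ (i : Fin ((2*k-1)*(r-1)+2)) (e : ℤ),
      ((L ≤ e ∧ e ≤ U) ∨ (L ≤ -e ∧ -e ≤ U)) →
      ∃ j, (andrasfai k r).Adj i j ∧
        ((((2*k-1)*(r-1)+2 : ℕ)):ℤ) ∣ ((j.val:ℤ) - ((i.val:ℤ) + e)) := by
    intro i e he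
    exact aux_andrasfai_step k r hk hr i e he
  have hN0 : (0:ℤ) < ((((2*k-1)*(r-1)+2 : ℕ)):ℤ) := by
    exact_mod_cast (show 0 < (2*k-1)*(r-1)+2 by omega)
  set t : ℤ := ((j.val:ℤ) - (i.val:ℤ)) % ((((2*k-1)*(r-1)+2 : ℕ)):ℤ) with htdef
  have ht0 : 0 ≤ t := Int.emod_nonneg _ (by omega)
  have htlt : t < U + L := by rw [← hUL, htdef]; exact Int.emod_lt_of_pos _ hN0
  have htdvd : ((((2*k-1)*(r-1)+2 : ℕ)):ℤ) ∣ ((j.val:ℤ) - ((i.val:ℤ) + t)) := by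
    refine ⟨((j.val:ℤ) - (i.val:ℤ)) / ((((2*k-1)*(r-1)+2 : ℕ)):ℤ), ?_⟩
    rw [htdef, Int.emod_def]; ring
  have htne : t ≠ 0 := by
    intro h0
    apply hij
    rw [h0] at htdvd
    have hz : (j.val:ℤ) - ((i.val:ℤ) + 0) = 0 := by
      refine Int.eq_zero_of_abs_lt_dvd htdvd ?_
      have hi := i.isLt; have hj := j.isLt
      rw [abs_lt]; omega
    exact Fin.ext (by omega)
  have hlo : ((k:ℕ):ℤ)*L - (((k-1:ℕ)):ℤ)*U ≤ t := by
    have hc : (((k-1:ℕ)):ℤ) = (k:ℤ)-1 := by omega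
    have hval : (k:ℤ)*L - ((k:ℤ)-1)*U = 1 := by rw [hLdef, hUdef]; ring
    have ht1 : 1 ≤ t := by omega
    rw [hc]
    linarith
  have hhi : t ≤ ((k:ℕ):ℤ)*U - (((k-1:ℕ)):ℤ)*L := by
    have hc : (((k-1:ℕ)):ℤ) = (k:ℤ)-1 := by omega
    have hval : (k:ℤ)*U - ((k:ℤ)-1)*L = U + L - 1 := by rw [hLdef, hUdef]; ring
    rw [hc]
    linarith
  obtain ⟨w, hwlen⟩ := aux_chain_walk hL1 hLU hstep k (k-1) t i j htdvd hlo hhi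
  have hw2 : w.length = 2*k-1 := by rw [hwlen]; omega
  have hphi' : φ j = φ i := hphi.symm
  let c : H.Walk (φ i) (φ i) := (w.map φ).copy rfl hphi'
  have hclen : c.length = 2*k-1 := by
    show ((w.map φ).copy rfl hphi').length = 2*k-1
    rw [Walk.length_copy, Walk.length_map, hw2]
  have hodd : Odd c.length := by
    rw [hclen]; exact ⟨k-1, by omega⟩
  obtain ⟨y, cyc, hcyc, hco, hcle⟩ := aux_exists_odd_cycle c.length c le_rfl hodd
  exact ⟨y, cyc, hcyc, hco, by omega⟩
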